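/- arXiv:q-alg/9608016 — 2 statements merged into one kernel-verified Lean document; each statement's English description precedes it below -/
import Mathlib

section
/- Let G be a finite group and let L ⊆ K = { f : G → ℂ | f(1) = 0 } be a nonzero subspace invariant under T_h for all h ∈ G and minimal with these properties (every nonzero T-invariant subspace contained in L equals L). Then there exist a nontrivial irreducible finite-dimensional complex representation ρ : G → GL(V) and a nonzero λ ∈ V* such that L = L_{V,ρ,λ}. -/
noncomputable section

variable {G : Type*} [Group G] [Fintype G]

/-- The operator `T_h` on functions `G → ℂ`: `(T_h f)(g) = f(gh) - f(h)`. -/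
def Tw (G : Type*) [Group G] (h : G) : (G → ℂ) →ₗ[ℂ] (G → ℂ) :=
  LinearMap.pi fun g => (LinearMap.proj (g * h) : (G → ℂ) →ₗ[ℂ] ℂ) -
    (LinearMap.proj h : (G → ℂ) →ₗ[ℂ] ℂ)

/-- The linear map `v ↦ f_v`, where `f_v(g) = λ(ρ(g)v) - λ(v)`. -/
def Fmap {V : Type*} [AddCommGroup V] [Module ℂ V]
    (ρ : Representation ℂ G V) (lam : V →ₗ[ℂ] ℂ) : V →ₗ[ℂ] (G → ℂ) :=
  LinearMap.pi fun g => lam ∘ₗ ρ g - lam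

lemma Tw_apply (h : G) (f : G → ℂ) (g : G) : Tw G h f g = f (g * h) - f h := rfl

/-- The representation of `G` on `L` by restriction of the `Tw` operators. -/
def rho0 (L : Submodule ℂ (G → ℂ)) (hK : ∀ f ∈ L, f 1 = 0)
    (hT : ∀ h : G, ∀ f ∈ L, Tw G h f ∈ L) : Representation ℂ G L where
  toFun h := (Tw G h).restrict (fun f hf => hT h f hf)
  map_one' := by
    apply LinearMap.ext
    intro f
    apply Subtype.ext
    funext g
    simp only [LinearMap.restrict_coe_apply, Tw_apply, mul_one, Module.End.one_apply]
    rw [hK f f.2, sub_zero]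
  map_mul' h k := by
    apply LinearMap.ext
    intro f
    apply Subtype.ext
    funext g
    simp only [LinearMap.restrict_coe_apply, Tw_apply, Module.End.mul_apply]
    rw [← mul_assoc]
    ring

/-- The functional `f ↦ -(1/|G|) ∑ f`. -/
def lam0 (L : Submodule ℂ (G → ℂ)) : L →ₗ[ℂ] ℂ where
  toFun f := -(Fintype.card G : ℂ)⁻¹ * ∑ x, (f : G → ℂ) x
  map_add' f₁ f₂ := by
    simp only [Submodule.coe_add, Pi.add_apply, Finset.sum_add_distrib]
    ring
  map_smul' c f := by
    simp only [Submodule.coe_smul, Pi.smul_apply, smul_eq_mul, RingHom.id_apply,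
      ← Finset.mul_sum]
    ring

lemma lam0_key (L : Submodule ℂ (G → ℂ)) (hK : ∀ f ∈ L, f 1 = 0)
    (hT : ∀ h : G, ∀ f ∈ L, Tw G h f ∈ L) (g : G) (f : L) :
    lam0 L (rho0 L hK hT g f) - lam0 L f = (f : G → ℂ) g := by
  have hcard : (Fintype.card G : ℂ) ≠ 0 := by
    exact_mod_cast Fintype.card_ne_zero
  have h1 : ((rho0 L hK hT g f : L) : G → ℂ) = Tw G g (f : G → ℂ) := rfl
  simp only [lam0, LinearMap.coe_mk, AddHom.coe_mk, h1, Tw_apply]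
  have h2 : ∑ x : G, ((f : G → ℂ) (x * g) - (f : G → ℂ) g)
      = (∑ x : G, (f : G → ℂ) x) - (Fintype.card G : ℂ) * (f : G → ℂ) g := by
    rw [Finset.sum_sub_distrib]
    congr 1
    · exact Fintype.sum_equiv (Equiv.mulRight g) _ _ (fun x => rfl)
    · simp [Finset.sum_const, mul_comm]
  rw [h2]
  field_simp
  ring

/-- Transport of `rho0` along a linear equivalence. -/
def rhoFin (L : Submodule ℂ (G → ℂ)) (hK : ∀ f ∈ L, f 1 = 0)
    (hT : ∀ h : G, ∀ f ∈ L, Tw G h f ∈ L) {n : ℕ} (e : L ≃ₗ[ℂ] (Fin n → ℂ)) :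
    Representation ℂ G (Fin n → ℂ) where
  toFun g := e.toLinearMap ∘ₗ (rho0 L hK hT g) ∘ₗ e.symm.toLinearMap
  map_one' := by
    apply LinearMap.ext
    intro v
    simp [map_one (rho0 L hK hT)]
  map_mul' h k := by
    apply LinearMap.ext
    intro v
    simp [map_mul (rho0 L hK hT)]

theorem stmt5 (L : Submodule ℂ (G → ℂ))
    (hK : ∀ f ∈ L, f 1 = 0)
    (hT : ∀ h : G, ∀ f ∈ L, Tw G h f ∈ L)
    (hne : L ≠ ⊥)
    (hmin : ∀ L' : Submodule ℂ (G → ℂ), L' ≤ L → (∀ h : G, ∀ f ∈ L', Tw G h f ∈ L') →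
      L' ≠ ⊥ → L' = L) :
    ∃ (n : ℕ) (ρ : Representation ℂ G (Fin n → ℂ)) (lam : (Fin n → ℂ) →ₗ[ℂ] ℂ),
      (∀ U : Submodule ℂ (Fin n → ℂ), (∀ g : G, ∀ v ∈ U, ρ g v ∈ U) → U = ⊥ ∨ U = ⊤) ∧
      (∃ g : G, ρ g ≠ 1) ∧ lam ≠ 0 ∧
      L = LinearMap.range (Fmap ρ lam) := by
  classical
  set n : ℕ := Module.finrank ℂ L with hn
  set e : L ≃ₗ[ℂ] (Fin n → ℂ) := (Module.finBasis ℂ L).equivFun with he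
  set ρ : Representation ℂ G (Fin n → ℂ) := rhoFin L hK hT e with hρ
  set lam : (Fin n → ℂ) →ₗ[ℂ] ℂ := lam0 L ∘ₗ e.symm.toLinearMap with hlam
  have hρ_apply : ∀ (g : G) (v : Fin n → ℂ), ρ g v = e (rho0 L hK hT g (e.symm v)) :=
    fun g v => rfl
  have hkey : ∀ (g : G) (v : Fin n → ℂ),
      lam (ρ g v) - lam v = ((e.symm v : L) : G → ℂ) g := by
    intro g v
    have : lam (ρ g v) = lam0 L (rho0 L hK hT g (e.symm v)) := by
      rw [hρ_apply]
      simp [hlam]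
    rw [this]
    have : lam v = lam0 L (e.symm v) := rfl
    rw [this]
    exact lam0_key L hK hT g (e.symm v)
  -- the range computation
  have hFmap : Fmap ρ lam = L.subtype ∘ₗ e.symm.toLinearMap := by
    apply LinearMap.ext
    intro v
    funext g
    have h1 : Fmap ρ lam v g = lam (ρ g v) - lam v := rfl
    rw [h1, hkey g v]
    rfl
  have hrange : L = LinearMap.range (Fmap ρ lam) := by
    rw [hFmap, LinearMap.range_comp, LinearEquiv.range, Submodule.map_top,
      Submodule.range_subtype]
  refine ⟨n, ρ, lam, ?_, ?_, ?_, hrange⟩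
  · -- irreducibility
    intro U hU
    by_cases hUbot : U = ⊥
    · exact Or.inl hUbot
    right
    set W : Submodule ℂ (G → ℂ) := (U.map e.symm.toLinearMap).map L.subtype with hW
    have hWle : W ≤ L := Submodule.map_subtype_le _ _
    have hWT : ∀ h : G, ∀ f ∈ W, Tw G h f ∈ W := by
      intro h f hf
      obtain ⟨u, hu, rfl⟩ := hf
      obtain ⟨x, hx, rfl⟩ := hu
      have h1 : Tw G h ((L.subtype) (e.symm.toLinearMap x)) = (L.subtype) (rho0 L hK hT h (e.symm x)) := rfl
      rw [h1]
      refine Submodule.mem_map_of_mem ?_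
      have h2 : rho0 L hK hT h (e.symm x) = e.symm (ρ h x) := by
        rw [hρ_apply]
        simp
      rw [h2]
      exact Submodule.mem_map_of_mem (hU h x hx)
    have hWne : W ≠ ⊥ := by
      obtain ⟨x, hx, hx0⟩ := (Submodule.ne_bot_iff U).mp hUbot
      rw [Submodule.ne_bot_iff]
      refine ⟨(L.subtype) (e.symm x), ?_, ?_⟩
      · exact Submodule.mem_map_of_mem (Submodule.mem_map_of_mem hx)
      · simp only [Submodule.coe_subtype, ne_eq, ZeroMemClass.coe_eq_zero]
        intro h
        apply hx0
        have := congrArg e h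
        simpa using this
    have hWL : W = L := hmin W hWle hWT hWne
    -- conclude U = ⊤
    have hinj : Function.Injective (Submodule.map L.subtype :
        Submodule ℂ L → Submodule ℂ (G → ℂ)) :=
      Submodule.map_injective_of_injective (Submodule.injective_subtype L)
    have h3 : U.map e.symm.toLinearMap = ⊤ := by
      apply hinj
      rw [Submodule.map_subtype_top]
      exact hWL
    have hinj2 : Function.Injective (Submodule.map e.symm.toLinearMap :
        Submodule ℂ (Fin n → ℂ) → Submodule ℂ L) :=
      Submodule.map_injective_of_injective e.symm.injective
    apply hinj2
    rw [h3, Submodule.map_top, LinearEquiv.range]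
  · -- nontriviality
    obtain ⟨f, hfL, hf0⟩ := (Submodule.ne_bot_iff L).mp hne
    have : ∃ g : G, f g ≠ 0 := by
      by_contra hcon
      push_neg at hcon
      exact hf0 (funext hcon)
    obtain ⟨g, hg⟩ := this
    refine ⟨g, fun h1 => hg ?_⟩
    have hkey2 := lam0_key L hK hT g ⟨f, hfL⟩
    have h2 : rho0 L hK hT g ⟨f, hfL⟩ = ⟨f, hfL⟩ := by
      have : rho0 L hK hT g ⟨f, hfL⟩ = e.symm (ρ g (e ⟨f, hfL⟩)) := by
        rw [hρ_apply]; simp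
      rw [this, h1]
      simp
    rw [h2, sub_self] at hkey2
    exact hkey2.symm
  · -- lam ≠ 0
    intro hlam0
    apply hne
    rw [Submodule.eq_bot_iff]
    intro f hf
    funext g
    have hkey3 := lam0_key L hK hT g ⟨f, hf⟩
    have h1 : lam0 L = lam ∘ₗ e.toLinearMap := by
      apply LinearMap.ext
      intro w
      simp [hlam]
    rw [h1] at hkey3
    simp only [hlam0, LinearMap.comp_apply, LinearMap.zero_apply, sub_self] at hkey3
    exact hkey3.symm
end
end

section
/- Let H be a Hopf algebra over a field k and let c ∈ H be a central element. For a linear functional φ : H → k set x_φ = Σ φ(c₍₁₎) c₍₂₎ − φ(c)·1 ∈ H. Then x_φ ∈ ker ε, and for every h ∈ H the left adjoint action satisfies ad_h(x_φ) = x_ψ, where ψ : H → k is the linear functional ψ(y) = Σ φ( S(h₍₁₎) · y · h₍₂₎ ). -/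
open TensorProduct Coalgebra HopfAlgebra

set_option synthInstance.maxHeartbeats 1000000
set_option maxHeartbeats 1000000

noncomputable section

variable (k : Type*) (H : Type*) [Field k] [Ring H] [HopfAlgebra k H]

/-- The left adjoint action as a linear map `H ⊗ H → H`, `h ⊗ x ↦ Σ h₍₁₎ x S(h₍₂₎)`. -/
def adMap : H ⊗[k] H →ₗ[k] H :=
  LinearMap.mul' k H ∘ₗ
  LinearMap.lTensor H (LinearMap.mul' k H) ∘ₗ
  LinearMap.lTensor H (TensorProduct.comm k H H).toLinearMap ∘ₗ
  LinearMap.lTensor H (LinearMap.rTensor H (antipode (R := k))) ∘ₗ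
  (TensorProduct.assoc k H H H).toLinearMap ∘ₗ
  LinearMap.rTensor H (comul : H →ₗ[k] H ⊗[k] H)

/-- The map `H ⊗ H → H`, `h ⊗ y ↦ Σ S(h₍₁₎) y h₍₂₎`. -/
def adRMap : H ⊗[k] H →ₗ[k] H :=
  LinearMap.mul' k H ∘ₗ
  LinearMap.lTensor H (LinearMap.mul' k H) ∘ₗ
  LinearMap.rTensor (H ⊗[k] H) (antipode (R := k)) ∘ₗ
  LinearMap.lTensor H (TensorProduct.comm k H H).toLinearMap ∘ₗ
  (TensorProduct.assoc k H H H).toLinearMap ∘ₗ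
  LinearMap.rTensor H (comul : H →ₗ[k] H ⊗[k] H)

/-- The element `x_φ = Σ φ(c₍₁₎) c₍₂₎ − φ(c)·1`. -/
def xOf (φ : H →ₗ[k] k) (c : H) : H :=
  ((TensorProduct.lid k H).toLinearMap ∘ₗ LinearMap.rTensor H φ ∘ₗ
    (comul : H →ₗ[k] H ⊗[k] H) - (Algebra.linearMap k H) ∘ₗ φ) c

variable {k H}

lemma adMap_tmul {ι : Type*} (h x : H) (r : Coalgebra.Repr k h ι) :
    adMap k H (h ⊗ₜ[k] x) =
      ∑ j ∈ r.index, r.left j * (x * antipode (R := k) (r.right j)) := by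
  have hrw : (comul (R := k) h) ⊗ₜ[k] x = ∑ j ∈ r.index, (r.left j ⊗ₜ r.right j) ⊗ₜ[k] x := by
    rw [← r.eq, sum_tmul]
  simp [adMap, hrw, map_sum, mul_comm]

lemma adRMap_tmul {ι : Type*} (h x : H) (r : Coalgebra.Repr k h ι) :
    adRMap k H (h ⊗ₜ[k] x) =
      ∑ j ∈ r.index, antipode (R := k) (r.left j) * (x * r.right j) := by
  have hrw : (comul (R := k) h) ⊗ₜ[k] x = ∑ j ∈ r.index, (r.left j ⊗ₜ r.right j) ⊗ₜ[k] x := by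
    rw [← r.eq, sum_tmul]
  simp [adRMap, hrw, map_sum]


lemma repr_counit_left {ι : Type*} {x : H} (r : Coalgebra.Repr k x ι) :
    ∑ i ∈ r.index, counit (R := k) (r.left i) • r.right i = x := by
  have := congrArg (TensorProduct.lid k H) (Coalgebra.sum_counit_tmul_eq r)
  simpa only [map_sum, lid_tmul, one_smul] using this

lemma repr_counit_right {ι : Type*} {x : H} (r : Coalgebra.Repr k x ι) :
    ∑ i ∈ r.index, counit (R := k) (r.right i) • r.left i = x := by
  have := congrArg (TensorProduct.rid k H) (Coalgebra.sum_tmul_counit_eq r)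
  simpa only [map_sum, rid_tmul, one_smul] using this

lemma one_tmul_smul_one (a : k) : ((a • (1:H)) ⊗ₜ[k] (1:H)) = a • (1 : H ⊗[k] H) := by
  rw [Algebra.TensorProduct.one_def]; exact (smul_tmul' a 1 1).symm

lemma tmul_one_smul_one (a : k) : ((1:H) ⊗ₜ[k] (a • (1:H))) = a • (1 : H ⊗[k] H) := by
  rw [Algebra.TensorProduct.one_def]; exact (tmul_smul a 1 1)

def Uhat (d : H ⊗[k] H) : H ⊗[k] ((H ⊗[k] H) ⊗[k] H) →ₗ[k] H ⊗[k] H :=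
  (LinearMap.mul' k (H ⊗[k] H) ∘ₗ
    TensorProduct.map (LinearMap.mulRight k d) ((TensorProduct.mk k H H) 1)) ∘ₗ
  LinearMap.rTensor H (LinearMap.rTensor H (LinearMap.mul' k H) ∘ₗ
    (TensorProduct.assoc k H H H).symm.toLinearMap) ∘ₗ
  (TensorProduct.assoc k H (H ⊗[k] H) H).symm.toLinearMap ∘ₗ
  LinearMap.rTensor ((H ⊗[k] H) ⊗[k] H) (antipode (R := k)) ∘ₗ
  LinearMap.lTensor H (LinearMap.lTensor (H ⊗[k] H) (antipode (R := k)))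

@[simp] lemma Uhat_tmul (d : H ⊗[k] H) (w x y z : H) :
    Uhat d (w ⊗ₜ[k] ((x ⊗ₜ[k] y) ⊗ₜ[k] z)) =
      ((antipode (R := k) w * x) ⊗ₜ[k] y) * d * ((1:H) ⊗ₜ[k] antipode (R := k) z) := by
  simp [Uhat]

def Wmap (D : H ⊗[k] H) : H ⊗[k] (H ⊗[k] H) →ₗ[k] H ⊗[k] H :=
  LinearMap.mulRight k D ∘ₗ
  LinearMap.rTensor H (LinearMap.mul' k H) ∘ₗ
  (TensorProduct.assoc k H H H).symm.toLinearMap ∘ₗ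
  LinearMap.rTensor (H ⊗[k] H) (antipode (R := k))

@[simp] lemma Wmap_tmul (D : H ⊗[k] H) (x y z : H) :
    Wmap D (x ⊗ₜ[k] (y ⊗ₜ[k] z)) = ((antipode (R := k) x * y) ⊗ₜ[k] z) * D := by
  simp [Wmap]

def Ymap (C : H ⊗[k] H) : H ⊗[k] (H ⊗[k] H) →ₗ[k] H ⊗[k] H :=
  LinearMap.mulLeft k C ∘ₗ
  LinearMap.lTensor H (LinearMap.mul' k H ∘ₗ LinearMap.lTensor H (antipode (R := k)))

@[simp] lemma Ymap_tmul (C : H ⊗[k] H) (x y z : H) :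
    Ymap C (x ⊗ₜ[k] (y ⊗ₜ[k] z)) = C * (x ⊗ₜ[k] (y * antipode (R := k) z)) := by
  simp [Ymap]

lemma key (d : H ⊗[k] H) (hd : ∀ x : H, comul (R := k) x * d = d * comul (R := k) x)
    {ι κ₁ κ₂ μ₁ μ₂ μ₃ μ₄ : Type*}
    (h : H) (rh : Coalgebra.Repr k h ι)
    (rp : ∀ j, Coalgebra.Repr k (rh.left j) κ₁) (rq : ∀ j, Coalgebra.Repr k (rh.right j) κ₂)
    (rpl : ∀ j s, Coalgebra.Repr k ((rp j).left s) μ₁)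
    (rpr : ∀ j s, Coalgebra.Repr k ((rp j).right s) μ₂)
    (rql : ∀ j t, Coalgebra.Repr k ((rq j).left t) μ₃)
    (rqr : ∀ j t, Coalgebra.Repr k ((rq j).right t) μ₄) :
    ∑ j ∈ rh.index, ((1:H) ⊗ₜ[k] rh.left j) * d * ((1:H) ⊗ₜ[k] antipode (R := k) (rh.right j)) =
    ∑ j ∈ rh.index, (antipode (R := k) (rh.left j) ⊗ₜ[k] (1:H)) * d * (rh.right j ⊗ₜ[k] (1:H)) := by
  have step1 : ∀ j, ((1:H) ⊗ₜ[k] rh.left j) * d * ((1:H) ⊗ₜ[k] antipode (R := k) (rh.right j)) =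
      ∑ s ∈ (rp j).index, ∑ m ∈ (rpl j s).index,
        ((antipode (R := k) ((rpl j s).left m) * (rpl j s).right m) ⊗ₜ[k] (rp j).right s) * d *
          ((1:H) ⊗ₜ[k] antipode (R := k) (rh.right j)) := by
    intro j
    conv_lhs => rw [← repr_counit_left (rp j)]
    rw [tmul_sum, Finset.sum_mul, Finset.sum_mul]
    refine Finset.sum_congr rfl fun s _ => ?_
    rw [tmul_smul, smul_mul_assoc, smul_mul_assoc,
      show (counit (R := k) ((rp j).left s) •
          (((1:H) ⊗ₜ[k] (rp j).right s) * d * ((1:H) ⊗ₜ[k] antipode (R := k) (rh.right j)))) =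
        ((counit (R := k) ((rp j).left s) • (1:H)) ⊗ₜ[k] (1:H)) *
          (((1:H) ⊗ₜ[k] (rp j).right s) * d * ((1:H) ⊗ₜ[k] antipode (R := k) (rh.right j))) from
        by rw [one_tmul_smul_one, smul_mul_assoc, one_mul],
      ← sum_antipode_mul_eq_smul (rpl j s), sum_tmul, Finset.sum_mul]
    refine Finset.sum_congr rfl fun m _ => ?_
    rw [mul_assoc, ← mul_assoc (_ ⊗ₜ[k] (1:H)), Algebra.TensorProduct.tmul_mul_tmul,
      mul_one, one_mul, mul_assoc]
  have step2 : ∀ j, (∑ s ∈ (rp j).index, ∑ m ∈ (rpl j s).index,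
        ((antipode (R := k) ((rpl j s).left m) * (rpl j s).right m) ⊗ₜ[k] (rp j).right s) * d *
          ((1:H) ⊗ₜ[k] antipode (R := k) (rh.right j))) =
      ∑ s ∈ (rp j).index, ∑ n ∈ (rpr j s).index,
        ((antipode (R := k) ((rp j).left s) * (rpr j s).left n) ⊗ₜ[k] (rpr j s).right n) * d *
          ((1:H) ⊗ₜ[k] antipode (R := k) (rh.right j)) := by
    intro j
    have hK := Coalgebra.sum_tmul_tmul_eq (rp j) (rpl j) (rpr j)
    have := congrArg (Wmap (d * ((1:H) ⊗ₜ[k] antipode (R := k) (rh.right j)))) hK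
    simpa only [map_sum, Wmap_tmul, mul_assoc] using this
  have step4 : (∑ j ∈ rh.index, ∑ s ∈ (rp j).index, ∑ n ∈ (rpr j s).index,
        ((antipode (R := k) ((rp j).left s) * (rpr j s).left n) ⊗ₜ[k] (rpr j s).right n) * d *
          ((1:H) ⊗ₜ[k] antipode (R := k) (rh.right j))) =
      ∑ j ∈ rh.index, ∑ t ∈ (rq j).index, ∑ m ∈ (rql j t).index,
        ((antipode (R := k) (rh.left j) * (rql j t).left m) ⊗ₜ[k] (rql j t).right m) * d *
          ((1:H) ⊗ₜ[k] antipode (R := k) ((rq j).right t)) := by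
    have star := Coalgebra.sum_tmul_tmul_eq rh rp rq
    have star2 := congrArg (LinearMap.lTensor H (LinearMap.rTensor H
      (comul (R := k) (A := H)))) star
    simp only [map_sum, LinearMap.lTensor_tmul, LinearMap.rTensor_tmul] at star2
    have star3 : (∑ j ∈ rh.index, ∑ s ∈ (rp j).index, ∑ n ∈ (rpr j s).index,
          (rp j).left s ⊗ₜ[k] (((rpr j s).left n ⊗ₜ[k] (rpr j s).right n) ⊗ₜ[k] rh.right j)) =
        ∑ j ∈ rh.index, ∑ t ∈ (rq j).index, ∑ m ∈ (rql j t).index,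
          rh.left j ⊗ₜ[k] (((rql j t).left m ⊗ₜ[k] (rql j t).right m) ⊗ₜ[k] (rq j).right t) := by
      calc (∑ j ∈ rh.index, ∑ s ∈ (rp j).index, ∑ n ∈ (rpr j s).index,
          (rp j).left s ⊗ₜ[k] (((rpr j s).left n ⊗ₜ[k] (rpr j s).right n) ⊗ₜ[k] rh.right j))
          = ∑ j ∈ rh.index, ∑ s ∈ (rp j).index,
            (rp j).left s ⊗ₜ[k] ((comul (R := k) ((rp j).right s)) ⊗ₜ[k] rh.right j) := by
            refine Finset.sum_congr rfl fun j _ => Finset.sum_congr rfl fun s _ => ?_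
            rw [← (rpr j s).eq, sum_tmul, tmul_sum]
        _ = ∑ j ∈ rh.index, ∑ t ∈ (rq j).index,
            rh.left j ⊗ₜ[k] ((comul (R := k) ((rq j).left t)) ⊗ₜ[k] (rq j).right t) := star2
        _ = _ := by
            refine Finset.sum_congr rfl fun j _ => Finset.sum_congr rfl fun t _ => ?_
            rw [← (rql j t).eq, sum_tmul, tmul_sum]
    have := congrArg (Uhat d) star3
    simpa only [map_sum, Uhat_tmul] using this
  have step7 : ∀ j, ∀ t ∈ (rq j).index,
      (∑ m ∈ (rql j t).index,
        (antipode (R := k) (rh.left j) ⊗ₜ[k] (1:H)) * d *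
          ((rql j t).left m ⊗ₜ[k] ((rql j t).right m * antipode (R := k) ((rq j).right t)))) =
      ∑ m ∈ (rql j t).index,
        ((antipode (R := k) (rh.left j) * (rql j t).left m) ⊗ₜ[k] (rql j t).right m) * d *
          ((1:H) ⊗ₜ[k] antipode (R := k) ((rq j).right t)) := by
    intro j t _
    have hmid : (∑ m ∈ (rql j t).index, d * ((rql j t).left m ⊗ₜ[k] (rql j t).right m)) =
        ∑ m ∈ (rql j t).index, ((rql j t).left m ⊗ₜ[k] (rql j t).right m) * d := by
      rw [← Finset.mul_sum, ← Finset.sum_mul, (rql j t).eq]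
      exact (hd _).symm
    calc (∑ m ∈ (rql j t).index,
          (antipode (R := k) (rh.left j) ⊗ₜ[k] (1:H)) * d *
            ((rql j t).left m ⊗ₜ[k] ((rql j t).right m * antipode (R := k) ((rq j).right t))))
        = (antipode (R := k) (rh.left j) ⊗ₜ[k] (1:H)) *
            (∑ m ∈ (rql j t).index, d * ((rql j t).left m ⊗ₜ[k] (rql j t).right m)) *
            ((1:H) ⊗ₜ[k] antipode (R := k) ((rq j).right t)) := by
          rw [Finset.mul_sum, Finset.sum_mul]
          refine Finset.sum_congr rfl fun m _ => ?_
          rw [show ((rql j t).left m ⊗ₜ[k]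
                ((rql j t).right m * antipode (R := k) ((rq j).right t))) =
              ((rql j t).left m ⊗ₜ[k] (rql j t).right m) *
                ((1:H) ⊗ₜ[k] antipode (R := k) ((rq j).right t)) from by
            rw [Algebra.TensorProduct.tmul_mul_tmul, mul_one]]
          simp only [mul_assoc]
      _ = (antipode (R := k) (rh.left j) ⊗ₜ[k] (1:H)) *
            (∑ m ∈ (rql j t).index, ((rql j t).left m ⊗ₜ[k] (rql j t).right m) * d) *
            ((1:H) ⊗ₜ[k] antipode (R := k) ((rq j).right t)) := by rw [hmid]
      _ = _ := by
          rw [Finset.mul_sum, Finset.sum_mul]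
          refine Finset.sum_congr rfl fun m _ => ?_
          rw [← mul_assoc, Algebra.TensorProduct.tmul_mul_tmul, one_mul]
  have step6 : ∀ j, (∑ t ∈ (rq j).index, ∑ m ∈ (rql j t).index,
        (antipode (R := k) (rh.left j) ⊗ₜ[k] (1:H)) * d *
          ((rql j t).left m ⊗ₜ[k] ((rql j t).right m * antipode (R := k) ((rq j).right t)))) =
      ∑ t ∈ (rq j).index, ∑ m ∈ (rqr j t).index,
        (antipode (R := k) (rh.left j) ⊗ₜ[k] (1:H)) * d *
          ((rq j).left t ⊗ₜ[k] ((rqr j t).left m * antipode (R := k) ((rqr j t).right m))) := by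
    intro j
    have hK := Coalgebra.sum_tmul_tmul_eq (rq j) (rql j) (rqr j)
    have := congrArg (Ymap ((antipode (R := k) (rh.left j) ⊗ₜ[k] (1:H)) * d)) hK
    simpa only [map_sum, Ymap_tmul, mul_assoc] using this
  have step5 : ∀ j, (∑ t ∈ (rq j).index, ∑ m ∈ (rqr j t).index,
        (antipode (R := k) (rh.left j) ⊗ₜ[k] (1:H)) * d *
          ((rq j).left t ⊗ₜ[k] ((rqr j t).left m * antipode (R := k) ((rqr j t).right m)))) =
      (antipode (R := k) (rh.left j) ⊗ₜ[k] (1:H)) * d * (rh.right j ⊗ₜ[k] (1:H)) := by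
    intro j
    conv_rhs => rw [← repr_counit_right (rq j)]
    rw [sum_tmul, Finset.mul_sum]
    refine Finset.sum_congr rfl fun t _ => ?_
    rw [← smul_tmul', mul_smul_comm,
      show (counit (R := k) ((rq j).right t) •
          ((antipode (R := k) (rh.left j) ⊗ₜ[k] (1:H)) * d * ((rq j).left t ⊗ₜ[k] (1:H)))) =
        ((antipode (R := k) (rh.left j) ⊗ₜ[k] (1:H)) * d * ((rq j).left t ⊗ₜ[k] (1:H))) *
          ((1:H) ⊗ₜ[k] (counit (R := k) ((rq j).right t) • (1:H))) from by
        rw [tmul_one_smul_one, mul_smul_comm, mul_one],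
      ← sum_mul_antipode_eq_smul (rqr j t), tmul_sum, Finset.mul_sum]
    refine Finset.sum_congr rfl fun m _ => ?_
    rw [mul_assoc ((antipode (R := k) (rh.left j) ⊗ₜ[k] (1:H)) * d),
      Algebra.TensorProduct.tmul_mul_tmul, mul_one, one_mul]
  calc (∑ j ∈ rh.index,
        ((1:H) ⊗ₜ[k] rh.left j) * d * ((1:H) ⊗ₜ[k] antipode (R := k) (rh.right j)))
      = ∑ j ∈ rh.index, ∑ s ∈ (rp j).index, ∑ m ∈ (rpl j s).index,
        ((antipode (R := k) ((rpl j s).left m) * (rpl j s).right m) ⊗ₜ[k] (rp j).right s) * d *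
          ((1:H) ⊗ₜ[k] antipode (R := k) (rh.right j)) :=
      Finset.sum_congr rfl fun j _ => step1 j
    _ = ∑ j ∈ rh.index, ∑ s ∈ (rp j).index, ∑ n ∈ (rpr j s).index,
        ((antipode (R := k) ((rp j).left s) * (rpr j s).left n) ⊗ₜ[k] (rpr j s).right n) * d *
          ((1:H) ⊗ₜ[k] antipode (R := k) (rh.right j)) :=
      Finset.sum_congr rfl fun j _ => step2 j
    _ = ∑ j ∈ rh.index, ∑ t ∈ (rq j).index, ∑ m ∈ (rql j t).index,
        ((antipode (R := k) (rh.left j) * (rql j t).left m) ⊗ₜ[k] (rql j t).right m) * d *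
          ((1:H) ⊗ₜ[k] antipode (R := k) ((rq j).right t)) := step4
    _ = ∑ j ∈ rh.index, ∑ t ∈ (rq j).index, ∑ m ∈ (rql j t).index,
        (antipode (R := k) (rh.left j) ⊗ₜ[k] (1:H)) * d *
          ((rql j t).left m ⊗ₜ[k] ((rql j t).right m * antipode (R := k) ((rq j).right t))) :=
      Finset.sum_congr rfl fun j _ => Finset.sum_congr rfl fun t ht => (step7 j t ht).symm
    _ = ∑ j ∈ rh.index, ∑ t ∈ (rq j).index, ∑ m ∈ (rqr j t).index,
        (antipode (R := k) (rh.left j) ⊗ₜ[k] (1:H)) * d *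
          ((rq j).left t ⊗ₜ[k] ((rqr j t).left m * antipode (R := k) ((rqr j t).right m))) :=
      Finset.sum_congr rfl fun j _ => step6 j
    _ = _ := Finset.sum_congr rfl fun j _ => step5 j

lemma phi_conj (φ : H →ₗ[k] k) (y y' : H) (t : H ⊗[k] H) :
    (TensorProduct.lid k H) ((LinearMap.rTensor H φ)
        (((1:H) ⊗ₜ[k] y) * t * ((1:H) ⊗ₜ[k] y'))) =
      y * (TensorProduct.lid k H ((LinearMap.rTensor H φ) t)) * y' := by
  induction t using TensorProduct.induction_on with
  | zero => simp
  | tmul a b =>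
      simp [Algebra.TensorProduct.tmul_mul_tmul, mul_smul_comm, smul_mul_assoc, mul_assoc]
  | add u v hu hv =>
      simp only [mul_add, add_mul, map_add, hu, hv]

lemma phi_conj' {ι : Type*} (φ : H →ₗ[k] k) {h : H} (rh : Coalgebra.Repr k h ι) (t : H ⊗[k] H) :
    (TensorProduct.lid k H) ((LinearMap.rTensor H
        (φ ∘ₗ adRMap k H ∘ₗ TensorProduct.mk k H H h)) t) =
      ∑ j ∈ rh.index, (TensorProduct.lid k H) ((LinearMap.rTensor H φ)
        ((antipode (R := k) (rh.left j) ⊗ₜ[k] (1:H)) * t * (rh.right j ⊗ₜ[k] (1:H)))) := by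
  induction t using TensorProduct.induction_on with
  | zero => simp
  | tmul a b =>
      simp only [LinearMap.rTensor_tmul, LinearMap.coe_comp, Function.comp_apply,
        mk_apply, lid_tmul, adRMap_tmul h a rh, map_sum,
        Algebra.TensorProduct.tmul_mul_tmul, mul_one, one_mul, Finset.sum_smul, mul_assoc]
  | add u v hu hv =>
      simp only [mul_add, add_mul, map_add, hu, hv, Finset.sum_add_distrib]

/-- `x_φ ∈ ker ε`, and `ad_h(x_φ) = x_ψ` where `ψ(y) = Σ φ(S(h₍₁₎) y h₍₂₎)`. -/
theorem stmt14 (c : H) (hc : ∀ x : H, c * x = x * c) (φ : H →ₗ[k] k) :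
    counit (R := k) (xOf k H φ c) = 0 ∧
    ∀ h : H, adMap k H (h ⊗ₜ[k] xOf k H φ c) =
      xOf k H (φ ∘ₗ adRMap k H ∘ₗ TensorProduct.mk k H H h) c := by
  have hxOf : ∀ ψ : H →ₗ[k] k, xOf k H ψ c =
      (TensorProduct.lid k H) ((LinearMap.rTensor H ψ) (comul (R := k) c)) - ψ c • 1 := by
    intro ψ
    simp [xOf, Algebra.linearMap_apply, Algebra.algebraMap_eq_smul_one]
  have hd : ∀ x : H, comul (R := k) x * comul (R := k) c =
      comul (R := k) c * comul (R := k) x := by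
    intro x
    rw [← Bialgebra.comul_mul, ← Bialgebra.comul_mul, hc x]
  constructor
  · -- counit part
    rw [hxOf, map_sub, map_smul, Bialgebra.counit_one, smul_eq_mul, mul_one]
    have : counit (R := k)
        ((TensorProduct.lid k H) ((LinearMap.rTensor H φ) (comul (R := k) c))) = φ c := by
      set rc := ℛ k c with hrc
      rw [← rc.eq]
      rw [map_sum, map_sum, map_sum]
      simp only [LinearMap.rTensor_tmul, lid_tmul, map_smul, smul_eq_mul]
      calc ∑ i ∈ rc.index, φ (rc.left i) * counit (R := k) (rc.right i)
          = φ (∑ i ∈ rc.index, counit (R := k) (rc.right i) • rc.left i) := by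
            rw [map_sum]
            exact Finset.sum_congr rfl fun i _ => by rw [map_smul, smul_eq_mul, mul_comm]
        _ = φ c := by rw [repr_counit_right rc]
    rw [this, sub_self]
  · -- adjoint action part
    intro h
    set ψ : H →ₗ[k] k := φ ∘ₗ adRMap k H ∘ₗ TensorProduct.mk k H H h with hψ
    set rh := ℛ k h with hrh
    set X : H := (TensorProduct.lid k H) ((LinearMap.rTensor H φ) (comul (R := k) c)) with hX
    -- value of ψ at c
    have hψc : ψ c = counit (R := k) h * φ c := by
      rw [hψ]
      simp only [LinearMap.coe_comp, Function.comp_apply, mk_apply]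
      rw [adRMap_tmul h c rh]
      calc φ (∑ j ∈ rh.index, antipode (R := k) (rh.left j) * (c * rh.right j))
          = φ ((∑ j ∈ rh.index, antipode (R := k) (rh.left j) * rh.right j) * c) := by
            rw [Finset.sum_mul]
            refine congrArg φ (Finset.sum_congr rfl fun j _ => ?_)
            rw [hc (rh.right j), ← mul_assoc]
        _ = counit (R := k) h * φ c := by
            rw [sum_antipode_mul_eq_smul rh, smul_mul_assoc, one_mul, map_smul, smul_eq_mul]
    -- the main computation
    have hkey := key (comul (R := k) c) hd h rh
      (fun j => ℛ k (rh.left j)) (fun j => ℛ k (rh.right j))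
      (fun j s => ℛ k ((ℛ k (rh.left j)).left s))
      (fun j s => ℛ k ((ℛ k (rh.left j)).right s))
      (fun j t => ℛ k ((ℛ k (rh.right j)).left t))
      (fun j t => ℛ k ((ℛ k (rh.right j)).right t))
    rw [hxOf φ, hxOf ψ, adMap_tmul h _ rh]
    have expand : ∀ j ∈ rh.index,
        rh.left j * ((X - φ c • 1) * antipode (R := k) (rh.right j)) =
        (TensorProduct.lid k H) ((LinearMap.rTensor H φ)
          (((1:H) ⊗ₜ[k] rh.left j) * comul (R := k) c *
            ((1:H) ⊗ₜ[k] antipode (R := k) (rh.right j)))) -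
          φ c • (rh.left j * antipode (R := k) (rh.right j)) := by
      intro j _
      rw [phi_conj, ← hX, sub_mul, mul_sub, smul_mul_assoc, one_mul, mul_smul_comm, mul_assoc]
    rw [Finset.sum_congr rfl expand, Finset.sum_sub_distrib, ← map_sum, ← map_sum, hkey,
      map_sum, map_sum, ← phi_conj' φ rh, ← Finset.smul_sum, sum_mul_antipode_eq_smul rh,
      hψc, smul_smul, mul_comm (φ c)]

end
end
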